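/- Let k be a difference field. If R and S are σ-separable k-σ-algebras, then R ⊗_k S is a σ-separable k-σ-algebra. -/

import Mathlib

open TensorProduct

/-- The diagonal endomorphism `σ(a ⊗ b) = σ(a) ⊗ σ(b)` of `A ⊗_k B` is injective
(i.e. `A ⊗_k B` is σ-reduced): any ring endomorphism satisfying the defining rule
on pure tensors is injective. -/
def SigmaReducedTensor (k A B : Type) [CommRing k] [CommRing A] [CommRing B]
    [Algebra k A] [Algebra k B] (σA : A →+* A) (σB : B →+* B) : Prop :=
  ∀ τ : (A ⊗[k] B) →+* A ⊗[k] B,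
    (∀ (a : A) (b : B), τ (a ⊗ₜ[k] b) = σA a ⊗ₜ[k] σB b) → Function.Injective τ

/-- A `k`-σ-algebra `R` is σ-separable over `k` if `R ⊗_k K` is σ-reduced for
every difference field extension `K` of `k`. -/
def IsSigmaSeparable (k R : Type) [Field k] [CommRing R] [Algebra k R]
    (σk : k →+* k) (σR : R →+* R) : Prop :=
  ∀ (K : Type) [Field K] [Algebra k K], ∀ σK : K →+* K,
    (∀ x : k, σK (algebraMap k K x) = algebraMap k K (σk x)) →
    SigmaReducedTensor k K R σK σR

namespace SigmaSepAux



section diag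
variable {k : Type} [CommSemiring k] (σk : k →+* k)
variable {M N : Type} [AddCommMonoid M] [AddCommMonoid N] [Module k M] [Module k N]

/-- The "diagonal" additive map `m ⊗ n ↦ fM m ⊗ fN n` for `σk`-semilinear maps. -/
noncomputable def diagAdd (fM : M →+ M) (fN : N →+ N)
    (hfM : ∀ (c : k) (m : M), fM (c • m) = σk c • fM m)
    (hfN : ∀ (c : k) (n : N), fN (c • n) = σk c • fN n) :
    M ⊗[k] N →+ M ⊗[k] N :=
  TensorProduct.liftAddHom
    { toFun := fun m =>
        { toFun := fun n => fM m ⊗ₜ[k] fN n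
          map_zero' := by simp
          map_add' := fun n n' => by simp [tmul_add] }
      map_zero' := by ext n; simp
      map_add' := fun m m' => by ext n; simp [add_tmul] }
    (fun c m n => by simp only [AddMonoidHom.coe_mk, ZeroHom.coe_mk, hfM, hfN, smul_tmul])

@[simp] lemma diagAdd_tmul (fM : M →+ M) (fN : N →+ N) (hfM) (hfN) (m : M) (n : N) :
    diagAdd σk fM fN hfM hfN (m ⊗ₜ[k] n) = fM m ⊗ₜ[k] fN n :=
  TensorProduct.liftAddHom_tmul _ _ _ _

end diag

section diagRing
variable {k : Type} [CommSemiring k] (σk : k →+* k)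
variable {A B : Type} [CommSemiring A] [CommSemiring B] [Algebra k A] [Algebra k B]

/-- Ring-hom version of `diagAdd` for algebra endomorphisms. -/
noncomputable def diagRing (fA : A →+* A) (fB : B →+* B)
    (hfA : ∀ (c : k) (a : A), fA (c • a) = σk c • fA a)
    (hfB : ∀ (c : k) (b : B), fB (c • b) = σk c • fB b) :
    A ⊗[k] B →+* A ⊗[k] B :=
  { diagAdd σk fA.toAddMonoidHom fB.toAddMonoidHom hfA hfB with
    map_one' := by
      simp [Algebra.TensorProduct.one_def]
    map_mul' := fun x y => by
      simp only [AddMonoidHom.toFun_eq_coe]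
      induction x with
      | zero => simp
      | tmul a b =>
        induction y with
        | zero => simp
        | tmul a' b' =>
          simp [Algebra.TensorProduct.tmul_mul_tmul]
        | add y₁ y₂ h₁ h₂ => rw [mul_add, map_add, map_add, mul_add, h₁, h₂]
      | add x₁ x₂ h₁ h₂ => rw [add_mul, map_add, map_add, add_mul, h₁, h₂] }

@[simp] lemma diagRing_tmul (fA : A →+* A) (fB : B →+* B) (hfA) (hfB) (a : A) (b : B) :
    diagRing σk fA fB hfA hfB (a ⊗ₜ[k] b) = fA a ⊗ₜ[k] fB b :=
  diagAdd_tmul σk fA.toAddMonoidHom fB.toAddMonoidHom hfA hfB a b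

end diagRing





variable {K A B : Type} [Field K] [AddCommGroup A] [Module K A]
  [AddCommGroup B] [Module K B]

/-- If the right-hand factors are linearly independent, a vanishing sum of pure
tensors has vanishing left-hand factors. -/
lemma sum_tmul_eq_zero {ι : Type} {w : ι → B} (hw : LinearIndependent K w)
    (a : ι →₀ A) (h : (a.sum fun i x => x ⊗ₜ[K] w i) = 0) : a = 0 := by
  classical
  obtain ⟨π, hπ⟩ := (Finsupp.linearCombination K w).exists_leftInverse_of_injective
    (LinearMap.ker_eq_bot.mpr hw)
  have hπw : ∀ i, π (w i) = Finsupp.single i 1 := by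
    intro i
    have : w i = Finsupp.linearCombination K w (Finsupp.single i 1) := by simp
    rw [this, ← LinearMap.comp_apply, hπ, LinearMap.id_apply]
  ext j
  let φ : A ⊗[K] B →ₗ[K] A :=
    (TensorProduct.rid K A).toLinearMap ∘ₗ
      (LinearMap.lTensor A ((Finsupp.lapply j) ∘ₗ π))
  have hφ : ∀ (x : A) (b : B), φ (x ⊗ₜ[K] b) = (π b) j • x := by
    intro x b
    simp [φ]
  have h2 := congrArg φ h
  rw [map_finsuppSum, map_zero] at h2
  have h3 : (a.sum fun i x => (π (w i)) j • x) = 0 := by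
    rw [← h2]
    exact (Finsupp.sum_congr fun i _ => (hφ _ _).symm)
  have h4 : (a.sum fun i x => if i = j then x else (0:A)) = 0 := by
    have heq : (a.sum fun i x => if i = j then x else (0:A))
        = a.sum fun i x => (π (w i)) j • x := by
      refine Finsupp.sum_congr fun i _ => ?_
      rw [hπw i, Finsupp.single_apply]
      by_cases hij : i = j
      · rw [if_pos hij, if_pos hij, one_smul]
      · rw [if_neg hij, if_neg hij, zero_smul]
    rw [heq, h3]
  rw [Finsupp.sum, Finset.sum_ite_eq' a.support j (fun x => a x)] at h4
  by_cases hj : j ∈ a.support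
  · rw [if_pos hj] at h4; simpa using h4
  · simpa using Finsupp.notMem_support_iff.mp hj

/-- Any element of `A ⊗[K] B` is a finite sum of pure tensors whose right-hand
factors are vectors of a fixed basis of `B`. -/
lemma exists_rep (c : Module.Basis (Module.Basis.ofVectorSpaceIndex K B) K B)
    (x : A ⊗[K] B) :
    ∃ a : (Module.Basis.ofVectorSpaceIndex K B) →₀ A, x = a.sum fun i y => y ⊗ₜ[K] c i := by
  induction x with
  | zero => exact ⟨0, by simp⟩
  | tmul y b =>
    refine ⟨(c.repr b).mapRange (· • y) (zero_smul K y), ?_⟩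
    rw [Finsupp.sum_mapRange_index (fun i => by simp)]
    conv_lhs => rw [← c.linearCombination_repr b]
    rw [Finsupp.linearCombination_apply, Finsupp.sum, tmul_sum, Finsupp.sum]
    exact Finset.sum_congr rfl fun i _ => (smul_tmul _ _ _).symm
  | add x₁ x₂ h₁ h₂ =>
    obtain ⟨a₁, rfl⟩ := h₁
    obtain ⟨a₂, rfl⟩ := h₂
    refine ⟨a₁ + a₂, ?_⟩
    rw [Finsupp.sum_add_index' (fun i => by simp) (fun i y z => add_tmul y z _)]

/-- Key lemma: tensoring two injective `σ`-semilinear maps (with `σ` surjective)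
over a field yields an injective map. -/
lemma tensorInj (σ : K →+* K) (hσ : Function.Surjective σ)
    (fA : A →+ A) (fB : B →+ B)
    (hfB : ∀ (c : K) (b : B), fB (c • b) = σ c • fB b)
    (hA : Function.Injective fA) (hB : Function.Injective fB)
    (g : A ⊗[K] B →+ A ⊗[K] B)
    (hg : ∀ (a : A) (b : B), g (a ⊗ₜ[K] b) = fA a ⊗ₜ[K] fB b) :
    Function.Injective g := by
  rw [injective_iff_map_eq_zero]
  intro x hx
  set c := Module.Basis.ofVectorSpace K B with hc
  obtain ⟨a, rfl⟩ := exists_rep c x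
  -- the images of the basis under fB stay linearly independent
  have hw : LinearIndependent K fun i => fB (c i) := by
    rw [linearIndependent_iff']
    intro s d hd i hi
    choose e he using fun i => hσ (d i)
    have h0 : (∑ i ∈ s, e i • c i) = 0 := by
      apply hB
      rw [map_sum, map_zero, ← hd]
      exact Finset.sum_congr rfl fun i _ => by rw [hfB, he]
    have := linearIndependent_iff'.mp c.linearIndependent s e h0 i hi
    rw [← he i, this, map_zero]
  -- push g through the sum
  have hgx : ((a.mapRange fA (map_zero fA)).sum fun i y => y ⊗ₜ[K] fB (c i)) = 0 := by
    rw [Finsupp.sum_mapRange_index (fun i => by simp)]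
    rw [← hx, map_finsuppSum]
    exact (Finsupp.sum_congr fun i _ => (hg _ _)).symm
  have hz := sum_tmul_eq_zero hw _ hgx
  have ha : a = 0 := by
    ext i
    have h5 : fA (a i) = 0 := by
      have := DFunLike.congr_fun hz i
      simpa [Finsupp.mapRange_apply] using this
    have := hA (show fA (a i) = fA 0 by rw [h5, map_zero])
    simpa using this
  rw [ha, Finsupp.sum_zero_index]


section main
variable {k R S : Type} [Field k] [CommRing R] [Algebra k R] [CommRing S] [Algebra k S]
variable (σk : k →+* k) (σR : R →+* R) (σS : S →+* S)

/-- Normal form for pure tensors in `(K ⊗[k] R) ⊗[K] (K ⊗[k] S)`. -/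
lemma tmul_norm {K : Type} [Field K] [Algebra k K] (a b : K) (r : R) (s : S) :
    (a ⊗ₜ[k] r) ⊗ₜ[K] (b ⊗ₜ[k] s) = ((a * b) ⊗ₜ[k] r) ⊗ₜ[K] ((1:K) ⊗ₜ[k] s) := by
  have h1 : (b ⊗ₜ[k] s : K ⊗[k] S) = b • ((1:K) ⊗ₜ[k] s) := by
    rw [smul_tmul', smul_eq_mul, mul_one]
  rw [h1, ← smul_tmul, smul_tmul', smul_eq_mul, mul_comm]

set_option maxHeartbeats 1600000 in
set_option synthInstance.maxHeartbeats 400000 in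
/-- The inversive case: if `σK` is surjective, the diagonal endomorphism of
`K ⊗[k] (R ⊗[k] S)` is injective. -/
lemma inj_of_surj {K : Type} [Field K] [Algebra k K] (σK : K →+* K)
    (hcompK : ∀ x : k, σK (algebraMap k K x) = algebraMap k K (σk x))
    (hcompR : ∀ x : k, σR (algebraMap k R x) = algebraMap k R (σk x))
    (hcompS : ∀ x : k, σS (algebraMap k S x) = algebraMap k S (σk x))
    (hsurj : Function.Surjective σK)
    (hR : IsSigmaSeparable k R σk σR) (hS : IsSigmaSeparable k S σk σS)
    (τ : (K ⊗[k] (R ⊗[k] S)) →+* K ⊗[k] (R ⊗[k] S))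
    (hτ : ∀ (a : K) (r : R) (s : S),
      τ (a ⊗ₜ[k] (r ⊗ₜ[k] s)) = σK a ⊗ₜ[k] (σR r ⊗ₜ[k] σS s)) :
    Function.Injective τ := by
  -- semilinearity data
  have hK : ∀ (c : k) (a : K), σK (c • a) = σk c • σK a := fun c a => by
    rw [Algebra.smul_def, Algebra.smul_def, map_mul, hcompK]
  have hr : ∀ (c : k) (r : R), σR (c • r) = σk c • σR r := fun c r => by
    rw [Algebra.smul_def, Algebra.smul_def, map_mul, hcompR]
  have hs : ∀ (c : k) (s : S), σS (c • s) = σk c • σS s := fun c s => by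
    rw [Algebra.smul_def, Algebra.smul_def, map_mul, hcompS]
  -- diagonal ring endomorphisms of K ⊗ R and K ⊗ S
  set fA : (K ⊗[k] R) →+* K ⊗[k] R := diagRing σk σK σR hK hr with hfAdef
  set fB : (K ⊗[k] S) →+* K ⊗[k] S := diagRing σk σK σS hK hs with hfBdef
  have hfA : Function.Injective fA :=
    hR K σK hcompK fA (fun a r => diagRing_tmul σk σK σR hK hr a r)
  have hfB : Function.Injective fB :=
    hS K σK hcompK fB (fun a s => diagRing_tmul σk σK σS hK hs a s)
  -- fB is σK-semilinear for the K-module structure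
  have hfBsl : ∀ (c : K) (y : K ⊗[k] S), fB (c • y) = σK c • fB y := by
    intro c y
    induction y with
    | zero => simp
    | tmul b s =>
      rw [smul_tmul', smul_eq_mul]
      rw [diagRing_tmul, diagRing_tmul, map_mul, smul_tmul', smul_eq_mul]
    | add y₁ y₂ h₁ h₂ => rw [smul_add, map_add, map_add, smul_add, h₁, h₂]
  -- transfer τ through the base-change isomorphism
  set Φ := TensorProduct.AlgebraTensorModule.distribBaseChange k K R S with hΦdef
  have hΦ : ∀ (a : K) (r : R) (s : S),
      Φ (a ⊗ₜ[k] (r ⊗ₜ[k] s)) = (a ⊗ₜ[k] r) ⊗ₜ[K] ((1:K) ⊗ₜ[k] s) := by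
    intro a r s
    simp [hΦdef, TensorProduct.AlgebraTensorModule.distribBaseChange]
  have hΦs : ∀ (a b : K) (r : R) (s : S),
      Φ.symm ((a ⊗ₜ[k] r) ⊗ₜ[K] (b ⊗ₜ[k] s)) = (b * a) ⊗ₜ[k] (r ⊗ₜ[k] s) := by
    intro a b r s
    simp [hΦdef, TensorProduct.AlgebraTensorModule.distribBaseChange]
    rw [smul_tmul', smul_eq_mul, AlgebraTensorModule.assoc_tmul]
  set g : ((K ⊗[k] R) ⊗[K] (K ⊗[k] S)) →+ (K ⊗[k] R) ⊗[K] (K ⊗[k] S) :=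
    ((Φ.toLinearMap.toAddMonoidHom.comp τ.toAddMonoidHom).comp
      Φ.symm.toLinearMap.toAddMonoidHom) with hgdef
  have hgapp : ∀ z, g z = Φ (τ (Φ.symm z)) := fun z => rfl
  have hg : ∀ (x : K ⊗[k] R) (y : K ⊗[k] S), g (x ⊗ₜ[K] y) = fA x ⊗ₜ[K] fB y := by
    intro x y
    induction x with
    | zero => rw [zero_tmul, g.map_zero, fA.map_zero, zero_tmul]
    | tmul a r =>
      induction y with
      | zero => rw [tmul_zero, g.map_zero, fB.map_zero, tmul_zero]
      | tmul b s =>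
        rw [hgapp, hΦs, hτ, hΦ, hfAdef, hfBdef, diagRing_tmul, diagRing_tmul]
        conv_rhs => rw [tmul_norm]
        rw [map_mul, mul_comm (σK b) (σK a)]
      | add y₁ y₂ h₁ h₂ =>
        rw [tmul_add, map_add, h₁, h₂, map_add, ← tmul_add]
    | add x₁ x₂ h₁ h₂ =>
      rw [add_tmul, map_add, h₁, h₂, map_add, ← add_tmul]
  have hginj : Function.Injective g :=
    tensorInj σK hsurj fA.toAddMonoidHom fB.toAddMonoidHom hfBsl hfA hfB g hg
  intro x y hxy
  have : g (Φ x) = g (Φ y) := by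
    rw [hgapp, hgapp, Φ.symm_apply_apply, Φ.symm_apply_apply, hxy]
  exact Φ.injective (hginj this)

end main
section limit

variable {K : Type} [Field K] (σK : K →+* K)

/-- The `ℕ`-indexed directed system `K → K → K → ⋯` with all maps `σK`. -/
noncomputable def flim : ∀ (i j : ℕ), i ≤ j → (K →+* K) := fun i j _ => σK ^ (j - i)

lemma flim_directed :
    DirectedSystem (fun _ : ℕ => K) (fun i j h => ⇑(flim σK i j h)) := by
  constructor
  · intro i x
    simp [flim]
  · intro p q r hrq hqp x
    simp only [flim, RingHom.coe_pow]
    rw [← Function.iterate_add_apply]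
    congr 1
    omega

/-- The inversive closure of `K` as a direct limit. -/
noncomputable abbrev InvCl : Type :=
  Ring.DirectLimit (fun _ : ℕ => K) (fun i j h => ⇑(flim σK i j h))

noncomputable instance : Field (InvCl σK) :=
  letI := flim_directed σK
  Field.DirectLimit.field (fun _ : ℕ => K) (fun i j h => flim σK i j h)

/-- The canonical maps into the inversive closure. -/
noncomputable abbrev ofCl (n : ℕ) : K →+* InvCl σK :=
  Ring.DirectLimit.of (fun _ : ℕ => K) (fun i j h => ⇑(flim σK i j h)) n

lemma ofCl_f (n : ℕ) (x : K) : ofCl σK (n+1) (σK x) = ofCl σK n x := by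
  have h : σK x = flim σK n (n+1) (Nat.le_succ n) x := by
    simp [flim]
  rw [h]
  exact Ring.DirectLimit.of_f (G := fun _ : ℕ => K)
    (f := fun i j h => ⇑(flim σK i j h)) (Nat.le_succ n) x

/-- The induced endomorphism of the inversive closure. -/
noncomputable abbrev σCl : InvCl σK →+* InvCl σK :=
  Ring.DirectLimit.map (f := fun i j h => flim σK i j h)
    (f' := fun i j h => flim σK i j h) (fun _ => σK)
    (fun i j h => by
      ext x
      simp only [RingHom.coe_comp, Function.comp_apply, flim, RingHom.coe_pow]
      rw [← Function.iterate_succ_apply' (⇑σK) (j - i) x,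
        ← Function.iterate_succ_apply (⇑σK) (j - i) x])

lemma σCl_of (n : ℕ) (x : K) : σCl σK (ofCl σK n x) = ofCl σK n (σK x) :=
  Ring.DirectLimit.map_apply_of _ _ _

lemma σCl_surj : Function.Surjective (σCl σK) := by
  intro z
  induction z using Ring.DirectLimit.induction_on with
  | ih n x =>
    exact ⟨ofCl σK (n+1) x, by rw [σCl_of, ofCl_f]⟩

end limit

end SigmaSepAux

open SigmaSepAux in
set_option maxHeartbeats 1600000 in
set_option synthInstance.maxHeartbeats 400000 in
/-- The tensor product of two σ-separable `k`-σ-algebras is σ-separable. -/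
theorem strongly_etale_stmt4
    (k R S : Type) [Field k] [CommRing R] [Algebra k R] [CommRing S] [Algebra k S]
    (σk : k →+* k) (σR : R →+* R) (σS : S →+* S)
    (hcompR : ∀ x : k, σR (algebraMap k R x) = algebraMap k R (σk x))
    (hcompS : ∀ x : k, σS (algebraMap k S x) = algebraMap k S (σk x))
    (hR : IsSigmaSeparable k R σk σR) (hS : IsSigmaSeparable k S σk σS) :
    ∀ σT : (R ⊗[k] S) →+* R ⊗[k] S,
      (∀ (r : R) (s : S), σT (r ⊗ₜ[k] s) = σR r ⊗ₜ[k] σS s) →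
      IsSigmaSeparable k (R ⊗[k] S) σk σT := by
  intro σT hσT K _instK _instA σK hcompK τ hτ
  classical
  -- the inversive closure of (K, σK), as a k-algebra
  letI : Algebra k (InvCl σK) := ((ofCl σK 0).comp (algebraMap k K)).toAlgebra
  have halg : ∀ x : k, algebraMap k (InvCl σK) x = ofCl σK 0 (algebraMap k K x) :=
    fun _ => rfl
  have hcomp' : ∀ x : k, σCl σK (algebraMap k (InvCl σK) x)
      = algebraMap k (InvCl σK) (σk x) := by
    intro x
    rw [halg, σCl_of, hcompK, halg]
  -- semilinearity data for the diagonal endomorphism of InvCl σK ⊗ (R ⊗ S)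
  have hK' : ∀ (c : k) (a : InvCl σK), σCl σK (c • a) = σk c • σCl σK a := by
    intro c a
    rw [Algebra.smul_def, Algebra.smul_def, map_mul, hcomp']
  have hT : ∀ (c : k) (n : R ⊗[k] S), σT (c • n) = σk c • σT n := by
    intro c n
    rw [Algebra.smul_def, Algebra.smul_def, map_mul]
    congr 1
    rw [Algebra.TensorProduct.algebraMap_apply, Algebra.TensorProduct.algebraMap_apply,
      hσT, hcompR, map_one]
  set τ' : ((InvCl σK) ⊗[k] (R ⊗[k] S)) →+* (InvCl σK) ⊗[k] (R ⊗[k] S) :=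
    diagRing σk (σCl σK) σT hK' hT with hτ'def
  have hτ'inj : Function.Injective τ' :=
    inj_of_surj σk σR σS (σCl σK) hcomp' hcompR hcompS (σCl_surj σK) hR hS τ'
      (fun a r s => by rw [hτ'def, diagRing_tmul, hσT])
  -- the k-linear embedding K → InvCl σK and the induced map on tensor products
  have hι : Function.Injective (ofCl σK 0) := (ofCl σK 0).injective
  set ιlin : K →ₗ[k] InvCl σK :=
    { toFun := ofCl σK 0
      map_add' := fun a b => map_add _ a b
      map_smul' := fun c a => by
        simp only [RingHom.id_apply]
        rw [Algebra.smul_def, Algebra.smul_def, map_mul, halg] } with hιdef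
  set J := LinearMap.rTensor (R ⊗[k] S) ιlin with hJdef
  have hJinj : Function.Injective J :=
    Module.Flat.rTensor_preserves_injective_linearMap ιlin hι
  have hsquare : ∀ x, J (τ x) = τ' (J x) := by
    intro x
    induction x with
    | zero => simp only [map_zero]
    | tmul a n =>
      rw [hτ, hJdef, LinearMap.rTensor_tmul, LinearMap.rTensor_tmul,
        hτ'def, diagRing_tmul]
      congr 1
    | add x₁ x₂ h₁ h₂ => rw [map_add, map_add, h₁, h₂, map_add, map_add]
  intro x y hxy
  apply hJinj
  apply hτ'inj
  rw [← hsquare, ← hsquare, hxy]
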